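/- arXiv:1311.2424 — 6 statements merged into one kernel-verified Lean document; each statement's English description precedes it below -/
import Mathlib

section
/- The stabilizer C_k of x_k under the conjugation action of GL_n(K) consists exactly of the invertible block upper-triangular matrices of the form [[g, *, *], [0, h, *], [0, 0, g]] with g ∈ GL_k and h ∈ GL_{n-2k}. -/
open Matrix

def xk (K : Type*) [Field K] (n k : ℕ) : Matrix (Fin n) (Fin n) K :=
  fun r c => if (r : ℕ) + (n - k) = (c : ℕ) then 1 else 0

lemma sum_pick {K : Type*} [Field K] {n : ℕ} (f : Fin n → K) (t : ℕ) :
    (∑ m : Fin n, if (m : ℕ) = t then f m else 0) = if h : t < n then f ⟨t, h⟩ else 0 := by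
  split_ifs with h
  · rw [Finset.sum_eq_single (⟨t, h⟩ : Fin n)]
    · simp
    · intro b _ hb
      rw [if_neg]
      exact fun e => hb (Fin.ext e)
    · simp
  · apply Finset.sum_eq_zero
    intro m _
    rw [if_neg]
    exact fun e => h (e ▸ m.isLt)

lemma mul_xk {K : Type*} [Field K] {n k : ℕ} (M : Matrix (Fin n) (Fin n) K) (i j : Fin n) :
    (M * xk K n k) i j =
      if h : n - k ≤ (j : ℕ) then M i ⟨(j : ℕ) - (n - k), by omega⟩ else 0 := by
  rw [Matrix.mul_apply]
  simp only [xk, mul_ite, mul_one, mul_zero]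
  split_ifs with hj
  · have e : ∀ m : Fin n, ((m : ℕ) + (n - k) = (j : ℕ)) ↔ ((m : ℕ) = (j : ℕ) - (n - k)) := by
      intro m; omega
    simp_rw [e]
    rw [sum_pick]
    rw [dif_pos]
  · apply Finset.sum_eq_zero
    intro m _
    rw [if_neg]
    omega

lemma xk_mul {K : Type*} [Field K] {n k : ℕ} (M : Matrix (Fin n) (Fin n) K) (i j : Fin n) :
    (xk K n k * M) i j =
      if h : (i : ℕ) + (n - k) < n then M ⟨(i : ℕ) + (n - k), h⟩ j else 0 := by
  rw [Matrix.mul_apply]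
  simp only [xk, ite_mul, one_mul, zero_mul]
  have e : ∀ m : Fin n, ((i : ℕ) + (n - k) = (m : ℕ)) ↔ ((m : ℕ) = (i : ℕ) + (n - k)) := by
    intro m; omega
  simp_rw [e]
  rw [sum_pick]

/-- The stabilizer `C_k` of `x_k` in `GL_n` consists exactly of the invertible block
upper-triangular matrices `[[g,*,*],[0,h,*],[0,0,g]]` with `g ∈ GL_k`, `h ∈ GL_{n-2k}`:
i.e. all entries below the block diagonal vanish and the top-left `k×k` block equals
the bottom-right `k×k` block. -/
theorem stmt_2 (K : Type*) [Field K] (n k : ℕ) (h : 2 * k ≤ n) (d : GL (Fin n) K) :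
    (d : Matrix (Fin n) (Fin n) K) * xk K n k = xk K n k * (d : Matrix (Fin n) (Fin n) K) ↔
      ((∀ i j : Fin n,
          ((k ≤ (i : ℕ) ∧ (j : ℕ) < k) ∨ (n - k ≤ (i : ℕ) ∧ (j : ℕ) < n - k)) →
          (d : Matrix (Fin n) (Fin n) K) i j = 0) ∧
        ∀ i j : Fin n, ∀ _hi : (i : ℕ) < k, ∀ _hj : (j : ℕ) < k,
          (d : Matrix (Fin n) (Fin n) K) i j =
            (d : Matrix (Fin n) (Fin n) K)
              ⟨(i : ℕ) + (n - k), by omega⟩ ⟨(j : ℕ) + (n - k), by omega⟩) := by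
  set M := (d : Matrix (Fin n) (Fin n) K) with hM
  constructor
  · intro hc
    have hc' : ∀ i j : Fin n, (M * xk K n k) i j = (xk K n k * M) i j := by
      intro i j; rw [hc]
    constructor
    · intro i j hij
      rcases hij with ⟨hi, hj⟩ | ⟨hi, hj⟩
      · have hjn : (j : ℕ) + (n - k) < n := by omega
        have := hc' i ⟨(j : ℕ) + (n - k), hjn⟩
        rw [mul_xk, xk_mul, dif_pos (by simp only [Fin.val_mk]; omega), dif_neg (by omega)] at this
        have ej : (⟨((⟨(j : ℕ) + (n - k), hjn⟩ : Fin n) : ℕ) - (n - k), by omega⟩ : Fin n) = j :=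
          Fin.ext (by simp)
        rwa [ej] at this
      · have hin : (i : ℕ) - (n - k) < n := by omega
        have := hc' ⟨(i : ℕ) - (n - k), hin⟩ j
        rw [mul_xk, xk_mul, dif_neg (by omega),
          dif_pos (show ((⟨(i : ℕ) - (n - k), hin⟩ : Fin n) : ℕ) + (n - k) < n by
            simp only [Fin.val_mk]; omega)] at this
        have ei : (⟨((⟨(i : ℕ) - (n - k), hin⟩ : Fin n) : ℕ) + (n - k), by
            simp only [Fin.val_mk]; omega⟩ : Fin n) = i :=
          Fin.ext (by simp only [Fin.val_mk]; omega)
        rw [ei] at this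
        exact this.symm
    · intro i j hi hj
      have hjn : (j : ℕ) + (n - k) < n := by omega
      have := hc' i ⟨(j : ℕ) + (n - k), hjn⟩
      rw [mul_xk, xk_mul, dif_pos (by simp only [Fin.val_mk]; omega), dif_pos (by omega)] at this
      have ej : (⟨((⟨(j : ℕ) + (n - k), hjn⟩ : Fin n) : ℕ) - (n - k), by omega⟩ : Fin n) = j :=
        Fin.ext (by simp)
      rw [ej] at this
      exact this
  · rintro ⟨h0, heq⟩
    ext i j
    rw [mul_xk, xk_mul]
    split_ifs with h1 h2 h2
    · have hik : (i : ℕ) < k := by omega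
      have hjk : (j : ℕ) - (n - k) < k := by omega
      have := heq i ⟨(j : ℕ) - (n - k), by omega⟩ hik hjk
      have ej : (⟨((⟨(j : ℕ) - (n - k), by omega⟩ : Fin n) : ℕ) + (n - k), by
          simp only [Fin.val_mk]; omega⟩ : Fin n) = j :=
        Fin.ext (by simp only [Fin.val_mk]; omega)
      rw [ej] at this
      exact this
    · exact h0 i ⟨(j : ℕ) - (n - k), by omega⟩ (Or.inl ⟨by omega, by simp only [Fin.val_mk]; omega⟩)
    · exact (h0 ⟨(i : ℕ) + (n - k), h2⟩ j (Or.inr ⟨by simp only [Fin.val_mk]; omega, by omega⟩)).symm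
    · rfl
end

section
/- Let W(C_k) ≤ S_n be the subgroup generated by the elements s_j·s_{n-k+j} for j = 1,…,k-1 together with the s_i for k+1 ≤ i ≤ n-k-1. If σ ∈ Z_k (a minimal coset representative of W/W(L)) and α ∈ W_k = ⟨s_1,…,s_{k-1}⟩, then the product σα is a minimal-length element of its left coset σα·W(C_k) in S_n. -/
def permLength (n : ℕ) (σ : Equiv.Perm (Fin n)) : ℕ :=
  (Finset.univ.filter (fun p : Fin n × Fin n => p.1 < p.2 ∧ σ p.2 < σ p.1)).card

def sT (n i : ℕ) : Equiv.Perm (Fin n) :=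
  if h : 1 ≤ i ∧ i < n then Equiv.swap ⟨i - 1, by omega⟩ ⟨i, h.2⟩ else 1

open Finset Equiv

theorem Equiv.Perm.apply_inv_self {α : Type*} (f : Equiv.Perm α) (x : α) : f (f⁻¹ x) = x :=
  Equiv.apply_symm_apply f x

theorem Equiv.Perm.inv_apply_self {α : Type*} (f : Equiv.Perm α) (x : α) : f⁻¹ (f x) = x :=
  Equiv.symm_apply_apply f x

namespace Stmt5

def Invs (n : ℕ) (σ : Equiv.Perm (Fin n)) : Finset (Fin n × Fin n) :=
  Finset.univ.filter (fun p => p.1 < p.2 ∧ σ p.2 < σ p.1)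

lemma permLength_eq {n : ℕ} (σ : Equiv.Perm (Fin n)) :
    permLength n σ = (Invs n σ).card := rfl

def blkN (n k x : ℕ) : ℕ := if x < k then 0 else if x < n - k then 1 else 2

lemma blkN_mono {n k x y : ℕ} (h : x ≤ y) : blkN n k x ≤ blkN n k y := by
  simp only [blkN]; split_ifs <;> omega

lemma lt_of_blkN_lt {n k : ℕ} {x y : Fin n} (h : blkN n k x.val < blkN n k y.val) :
    x < y := by
  rcases lt_trichotomy x y with h1 | h1 | h1
  · exact h1
  · subst h1; omega
  · have := blkN_mono (n := n) (k := k) (le_of_lt (Fin.lt_def.mp h1))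
    omega

lemma swap_adj_lt {n : ℕ} (a b p q : Fin n) (hab : (a : ℕ) + 1 = b) (hpq : p < q)
    (hne : ¬(p = a ∧ q = b)) : Equiv.swap a b p < Equiv.swap a b q := by
  have hq := q.isLt
  simp only [Equiv.swap_apply_def, Fin.lt_def, Fin.ext_iff] at *
  split_ifs <;> omega

lemma permLength_mul_swap {n : ℕ} (σ : Equiv.Perm (Fin n)) (a b : Fin n)
    (hab : (a : ℕ) + 1 = b) (hinc : σ a < σ b) :
    permLength n (σ * Equiv.swap a b) = permLength n σ + 1 := by
  classical
  set s := Equiv.swap a b with hs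
  have hss : ∀ x, s (s x) = x := fun x => Equiv.swap_apply_self a b x
  have hab' : a < b := Fin.lt_def.mpr (by omega)
  have hmem : Invs n (σ * s) = (Invs n σ).image (fun pr => (s pr.1, s pr.2)) ∪ {(a, b)} := by
    ext pr
    simp only [Invs, Finset.mem_union, Finset.mem_image, Finset.mem_filter, Finset.mem_univ,
      true_and, Finset.mem_singleton]
    simp only [Equiv.Perm.mul_apply]
    constructor
    · rintro ⟨h1, h2⟩
      by_cases hpa : pr = (a, b)
      · exact Or.inr hpa
      · refine Or.inl ⟨(s pr.1, s pr.2), ⟨?_, ?_⟩, ?_⟩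
        · exact swap_adj_lt a b _ _ hab h1 (by
            intro ⟨e1, e2⟩; exact hpa (Prod.ext e1 e2))
        · simpa [hss] using h2
        · simp [hss]
    · rintro (⟨qr, ⟨hq1, hq2⟩, rfl⟩ | rfl)
      · have hqn : ¬(qr.1 = a ∧ qr.2 = b) := by
          rintro ⟨e1, e2⟩; rw [e1, e2] at hq2; exact absurd hinc (not_lt.mpr hq2.le)
        refine ⟨swap_adj_lt a b _ _ hab hq1 hqn, ?_⟩
        simpa [hss] using hq2
      · refine ⟨hab', ?_⟩
        simp [hs, Equiv.swap_apply_left, Equiv.swap_apply_right, hinc]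
  have hinj : Function.Injective (fun pr : Fin n × Fin n => (s pr.1, s pr.2)) := by
    intro x y hxy
    simp only [Prod.mk.injEq] at hxy
    exact Prod.ext (s.injective hxy.1) (s.injective hxy.2)
  have hdisj : Disjoint ((Invs n σ).image (fun pr => (s pr.1, s pr.2))) ({(a, b)} : Finset _) := by
    rw [Finset.disjoint_singleton_right]
    intro hmem'
    obtain ⟨qr, hqr, heq⟩ := Finset.mem_image.mp hmem'
    simp only [Prod.mk.injEq] at heq
    have h1 : qr.1 = s a := by rw [← heq.1, hss]
    have h2 : qr.2 = s b := by rw [← heq.2, hss]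
    rw [Equiv.swap_apply_left] at h1
    rw [Equiv.swap_apply_right] at h2
    have := (Finset.mem_filter.mp hqr).2.1
    rw [h1, h2] at this
    exact absurd hab' (not_lt.mpr this.le)
  rw [permLength_eq, permLength_eq, hmem, Finset.card_union_of_disjoint hdisj,
    Finset.card_image_of_injective _ hinj, Finset.card_singleton]

end Stmt5

namespace Stmt5

variable {n k : ℕ}

lemma sigma_adj (hkn : 2 * k ≤ n) (σ : Equiv.Perm (Fin n))
    (hσ : ∀ i : ℕ, 1 ≤ i → i < n → i ≠ k → i ≠ n - k →
      permLength n (σ * sT n i) = permLength n σ + 1)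
    (p q : Fin n) (hq : q.val = p.val + 1)
    (hblk : blkN n k p.val = blkN n k q.val) : σ p < σ q := by
  rw [hq] at hblk
  have hk : p.val + 1 ≠ k := by
    intro he; simp only [blkN] at hblk; split_ifs at hblk <;> omega
  have hnk : p.val + 1 ≠ n - k := by
    intro he; simp only [blkN] at hblk; split_ifs at hblk <;> omega
  have hqn := q.isLt
  have hsT : sT n (p.val + 1) = Equiv.swap p q := by
    rw [sT, dif_pos ⟨by omega, by omega⟩]
    congr 1
    all_goals
      apply Fin.ext
      first
        | exact (show p.val + 1 - 1 = p.val by omega)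
        | exact (show p.val + 1 = q.val by omega)
  have heq := hσ (p.val + 1) (by omega) (by omega) hk hnk
  rw [hsT] at heq
  by_contra hle
  have hne : σ q ≠ σ p := by
    intro he
    have := congrArg Fin.val (σ.injective he)
    omega
  have hlt : σ q < σ p := lt_of_le_of_ne (not_lt.mp hle) hne
  have h2 : permLength n (σ * Equiv.swap p q * Equiv.swap p q) =
      permLength n (σ * Equiv.swap p q) + 1 := by
    apply permLength_mul_swap _ p q (by omega)
    simp only [Equiv.Perm.mul_apply, Equiv.swap_apply_left, Equiv.swap_apply_right]
    exact hlt
  rw [mul_assoc, Equiv.swap_mul_self, mul_one] at h2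
  omega

lemma sigma_sorted (hkn : 2 * k ≤ n) (σ : Equiv.Perm (Fin n))
    (hσ : ∀ i : ℕ, 1 ≤ i → i < n → i ≠ k → i ≠ n - k →
      permLength n (σ * sT n i) = permLength n σ + 1) :
    ∀ p q : Fin n, p < q → blkN n k p.val = blkN n k q.val → σ p < σ q := by
  suffices H : ∀ d : ℕ, ∀ p q : Fin n, q.val = p.val + d + 1 →
      blkN n k p.val = blkN n k q.val → σ p < σ q by
    intro p q hpq hblk
    have : q.val = p.val + (q.val - p.val - 1) + 1 := by
      have := Fin.lt_def.mp hpq; omega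
    exact H _ p q this hblk
  intro d
  induction d with
  | zero =>
    intro p q hq hblk
    exact sigma_adj hkn σ hσ p q (by omega) hblk
  | succ d ih =>
    intro p q hq hblk
    have hrn : p.val + d + 1 < n := by have := q.isLt; omega
    have hr : (⟨p.val + d + 1, hrn⟩ : Fin n).val = p.val + d + 1 := rfl
    have hbr : blkN n k p.val = blkN n k (p.val + d + 1) := by
      have h1 := blkN_mono (n := n) (k := k) (show p.val ≤ p.val + d + 1 by omega)
      have h2 := blkN_mono (n := n) (k := k) (show p.val + d + 1 ≤ q.val by omega)
      omega
    have h1 : σ p < σ ⟨p.val + d + 1, hrn⟩ := ih p ⟨p.val + d + 1, hrn⟩ rfl hbr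
    have h2 : σ ⟨p.val + d + 1, hrn⟩ < σ q := by
      apply sigma_adj hkn σ hσ _ q (by omega)
      rw [hr, ← hbr, hblk]
    exact lt_trans h1 h2

lemma permLength_mul_of_sorted (σ τ : Equiv.Perm (Fin n))
    (hs : ∀ p q : Fin n, p < q → blkN n k p.val = blkN n k q.val → σ p < σ q)
    (ht : ∀ x : Fin n, blkN n k ((τ x) : Fin n).val = blkN n k x.val) :
    permLength n (σ * τ) = permLength n σ + permLength n τ := by
  classical
  have htinv : ∀ x : Fin n, blkN n k ((τ⁻¹ x) : Fin n).val = blkN n k x.val := by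
    intro x
    have := ht (τ⁻¹ x)
    rw [Equiv.Perm.apply_inv_self] at this
    exact this.symm
  rw [permLength_eq, permLength_eq, permLength_eq]
  have hsame : ((Invs n (σ * τ)).filter
      (fun pr => blkN n k pr.1.val = blkN n k pr.2.val)).card = (Invs n τ).card := by
    congr 1
    ext pr
    simp only [Finset.mem_filter, Invs, Finset.mem_univ, true_and]
    simp only [Equiv.Perm.mul_apply]
    constructor
    · rintro ⟨⟨h1, h2⟩, h3⟩
      refine ⟨h1, ?_⟩
      have hb : blkN n k ((τ pr.1 : Fin n)).val = blkN n k ((τ pr.2 : Fin n)).val := by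
        rw [ht pr.1, ht pr.2]; exact h3
      rcases lt_trichotomy (τ pr.1) (τ pr.2) with hlt | heq | hgt
      · exact absurd (hs _ _ hlt hb) (not_lt.mpr h2.le)
      · exfalso
        have he := τ.injective heq
        rw [he] at h1
        exact lt_irrefl _ h1
      · exact hgt
    · rintro ⟨h1, h2⟩
      have h3 : blkN n k pr.1.val = blkN n k pr.2.val := by
        by_contra hne
        have hlt : blkN n k pr.1.val < blkN n k pr.2.val :=
          lt_of_le_of_ne (blkN_mono (le_of_lt (Fin.lt_def.mp h1))) hne
        have hlt2 : blkN n k ((τ pr.1 : Fin n)).val < blkN n k ((τ pr.2 : Fin n)).val := by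
          rw [ht pr.1, ht pr.2]; exact hlt
        exact absurd (lt_of_blkN_lt hlt2) (not_lt.mpr h2.le)
      have hb : blkN n k ((τ pr.2 : Fin n)).val = blkN n k ((τ pr.1 : Fin n)).val := by
        rw [ht pr.1, ht pr.2]; exact h3.symm
      exact ⟨⟨h1, hs _ _ h2 hb⟩, h3⟩
  have hcross : ((Invs n (σ * τ)).filter
      (fun pr => ¬ blkN n k pr.1.val = blkN n k pr.2.val)).card = (Invs n σ).card := by
    apply Finset.card_bij' (fun pr _ => ((τ pr.1 : Fin n), (τ pr.2 : Fin n)))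
      (fun qr _ => ((τ⁻¹ qr.1 : Fin n), (τ⁻¹ qr.2 : Fin n)))
    · rintro pr hpr
      simp only [Finset.mem_filter, Invs, Finset.mem_univ, true_and] at hpr ⊢
      simp only [Equiv.Perm.mul_apply] at hpr ⊢
      obtain ⟨⟨h1, h2⟩, h3⟩ := hpr
      have hlt : blkN n k pr.1.val < blkN n k pr.2.val :=
        lt_of_le_of_ne (blkN_mono (le_of_lt (Fin.lt_def.mp h1))) h3
      have hlt2 : blkN n k ((τ pr.1 : Fin n)).val < blkN n k ((τ pr.2 : Fin n)).val := by
        rw [ht pr.1, ht pr.2]; exact hlt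
      exact ⟨lt_of_blkN_lt hlt2, h2⟩
    · rintro qr hqr
      simp only [Finset.mem_filter, Invs, Finset.mem_univ, true_and] at hqr ⊢
      simp only [Equiv.Perm.mul_apply, Equiv.Perm.apply_inv_self] at hqr ⊢
      obtain ⟨h1, h2⟩ := hqr
      have hne : blkN n k qr.1.val ≠ blkN n k qr.2.val := by
        intro he
        exact absurd (hs qr.1 qr.2 h1 he) (not_lt.mpr h2.le)
      have hlt : blkN n k qr.1.val < blkN n k qr.2.val :=
        lt_of_le_of_ne (blkN_mono (le_of_lt (Fin.lt_def.mp h1))) hne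
      have hlt' : blkN n k ((τ⁻¹ qr.1 : Fin n)).val < blkN n k ((τ⁻¹ qr.2 : Fin n)).val := by
        rw [htinv qr.1, htinv qr.2]; exact hlt
      refine ⟨⟨lt_of_blkN_lt hlt', h2⟩, ?_⟩
      rw [htinv qr.1, htinv qr.2]; exact hne
    · intro pr _; simp
    · intro qr _; simp
  rw [← Finset.card_filter_add_card_filter_not
    (s := Invs n (σ * τ)) (p := fun pr => blkN n k pr.1.val = blkN n k pr.2.val), hsame, hcross]
  omega

end Stmt5
namespace Stmt5

variable {n k : ℕ}

def Inv0 (n k : ℕ) (π : Equiv.Perm (Fin n)) : Finset (Fin n × Fin n) :=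
  Finset.univ.filter (fun pr => pr.1 < pr.2 ∧ pr.2.val < k ∧ π pr.2 < π pr.1)

def Inv2 (n k : ℕ) (π : Equiv.Perm (Fin n)) : Finset (Fin n × Fin n) :=
  Finset.univ.filter (fun pr => pr.1 < pr.2 ∧ n - k ≤ pr.1.val ∧ π pr.2 < π pr.1)

/-- if a permutation maps block0 into block0 then so does its inverse -/
lemma inv_pres0 {x : Equiv.Perm (Fin n)} (hx : ∀ v : Fin n, v.val < k → ((x v) : Fin n).val < k) :
    ∀ v : Fin n, v.val < k → ((x⁻¹ v) : Fin n).val < k := by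
  classical
  set S : Finset (Fin n) := Finset.univ.filter (fun v => v.val < k) with hS
  have himg : S.image x = S := by
    apply Finset.eq_of_subset_of_card_le
    · intro v hv
      obtain ⟨u, hu, rfl⟩ := Finset.mem_image.mp hv
      simp only [hS, Finset.mem_filter, Finset.mem_univ, true_and] at hu ⊢
      exact hx u hu
    · rw [Finset.card_image_of_injective _ x.injective]
  intro v hv
  have hv' : v ∈ S := by simp [hS, hv]
  rw [← himg] at hv'
  obtain ⟨u, hu, he⟩ := Finset.mem_image.mp hv'
  have : x⁻¹ v = u := by rw [← he, Equiv.Perm.inv_apply_self]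
  rw [this]
  simpa [hS] using hu

lemma Inv0_mul_le (x y : Equiv.Perm (Fin n))
    (hy : ∀ v : Fin n, v.val < k → ((y v) : Fin n).val < k) :
    (Inv0 n k (x * y)).card ≤ (Inv0 n k x).card + (Inv0 n k y).card := by
  classical
  set T : Finset (Fin n × Fin n) := Finset.univ.filter
    (fun pr => pr.1 < pr.2 ∧ pr.2.val < k ∧ y pr.1 < y pr.2 ∧ x (y pr.2) < x (y pr.1)) with hT
  have hsub : Inv0 n k (x * y) ⊆ Inv0 n k y ∪ T := by
    intro pr hpr
    simp only [Inv0, Finset.mem_filter, Finset.mem_univ, true_and] at hpr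
    simp only [Equiv.Perm.mul_apply] at hpr
    obtain ⟨h1, h2, h3⟩ := hpr
    rcases lt_trichotomy (y pr.1) (y pr.2) with hlt | heq | hgt
    · apply Finset.mem_union_right
      simp only [hT, Finset.mem_filter, Finset.mem_univ, true_and]
      exact ⟨h1, h2, hlt, h3⟩
    · exfalso
      have := y.injective heq
      rw [this] at h1
      exact lt_irrefl _ h1
    · apply Finset.mem_union_left
      simp only [Inv0, Finset.mem_filter, Finset.mem_univ, true_and]
      exact ⟨h1, h2, hgt⟩
  have hT_le : T.card ≤ (Inv0 n k x).card := by
    apply Finset.card_le_card_of_injOn (fun pr => ((y pr.1 : Fin n), (y pr.2 : Fin n)))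
    · intro pr hpr
      simp only [hT, Finset.mem_coe, Finset.mem_filter, Finset.mem_univ, true_and] at hpr
      obtain ⟨h1, h2, h3, h4⟩ := hpr
      simp only [Inv0, Finset.mem_coe, Finset.mem_filter, Finset.mem_univ, true_and]
      exact ⟨h3, hy pr.2 h2, h4⟩
    · intro a _ b _ he
      simp only [Prod.mk.injEq] at he
      exact Prod.ext (y.injective he.1) (y.injective he.2)
  calc (Inv0 n k (x * y)).card ≤ (Inv0 n k y ∪ T).card := Finset.card_le_card hsub
    _ ≤ (Inv0 n k y).card + T.card := Finset.card_union_le _ _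
    _ ≤ (Inv0 n k x).card + (Inv0 n k y).card := by omega

lemma Inv0_inv (x : Equiv.Perm (Fin n))
    (hx : ∀ v : Fin n, v.val < k → ((x v) : Fin n).val < k) :
    (Inv0 n k x⁻¹).card = (Inv0 n k x).card := by
  classical
  have hxi := inv_pres0 (k := k) hx
  apply Finset.card_bij' (fun pr _ => ((x⁻¹ pr.2 : Fin n), (x⁻¹ pr.1 : Fin n)))
    (fun qr _ => ((x qr.2 : Fin n), (x qr.1 : Fin n)))
  · rintro pr hpr
    simp only [Inv0, Finset.mem_filter, Finset.mem_univ, true_and] at hpr ⊢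
    obtain ⟨h1, h2, h3⟩ := hpr
    refine ⟨h3, ?_, ?_⟩
    · exact hxi pr.1 (lt_trans (Fin.lt_def.mp h1) h2)
    · rw [Equiv.Perm.apply_inv_self, Equiv.Perm.apply_inv_self]
      exact h1
  · rintro qr hqr
    simp only [Inv0, Finset.mem_filter, Finset.mem_univ, true_and] at hqr ⊢
    obtain ⟨h1, h2, h3⟩ := hqr
    refine ⟨h3, ?_, ?_⟩
    · exact hx qr.1 (lt_trans (Fin.lt_def.mp h1) h2)
    · rw [Equiv.Perm.inv_apply_self, Equiv.Perm.inv_apply_self]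
      exact h1
  · intro pr _; simp
  · intro qr _; simp

lemma Inv2_eq_Inv0 (hkn : 2 * k ≤ n) (c : Equiv.Perm (Fin n))
    (hc0 : ∀ v : Fin n, v.val < k → ((c v) : Fin n).val < k)
    (hcD : ∀ v : Fin n, (hv : v.val < k) → ((c ⟨v.val + (n - k), by omega⟩ : Fin n)).val
      = ((c v) : Fin n).val + (n - k)) :
    (Inv2 n k c).card = (Inv0 n k c).card := by
  classical
  apply Finset.card_bij'
    (fun pr _ => ((⟨pr.1.val - (n - k), lt_of_le_of_lt (Nat.sub_le _ _) pr.1.isLt⟩ : Fin n),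
                  (⟨pr.2.val - (n - k), lt_of_le_of_lt (Nat.sub_le _ _) pr.2.isLt⟩ : Fin n)))
    (fun qr _ => ((⟨(qr.1.val + (n - k)) % n, Nat.mod_lt _ qr.1.pos⟩ : Fin n),
                  (⟨(qr.2.val + (n - k)) % n, Nat.mod_lt _ qr.2.pos⟩ : Fin n)))
  · rintro pr hpr
    simp only [Inv2, Inv0, Finset.mem_filter, Finset.mem_univ, true_and] at hpr ⊢
    obtain ⟨h1, h2, h3⟩ := hpr
    have hp2 := pr.2.isLt
    have h12 := Fin.lt_def.mp h1
    refine ⟨Fin.mk_lt_mk.mpr (by omega), show pr.2.val - (n - k) < k by omega, ?_⟩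
    have e1 : pr.1 = ⟨(pr.1.val - (n - k)) + (n - k), by omega⟩ :=
      Fin.ext (show pr.1.val = pr.1.val - (n - k) + (n - k) by omega)
    have e2 : pr.2 = ⟨(pr.2.val - (n - k)) + (n - k), by omega⟩ :=
      Fin.ext (show pr.2.val = pr.2.val - (n - k) + (n - k) by omega)
    have d1 : ((c pr.1 : Fin n)).val =
        ((c (⟨pr.1.val - (n - k), lt_of_le_of_lt (Nat.sub_le _ _) pr.1.isLt⟩ : Fin n) : Fin n)).val
          + (n - k) := by
      conv_lhs => rw [e1]
      exact hcD ⟨pr.1.val - (n - k), lt_of_le_of_lt (Nat.sub_le _ _) pr.1.isLt⟩ (by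
        show pr.1.val - (n - k) < k; omega)
    have d2 : ((c pr.2 : Fin n)).val =
        ((c (⟨pr.2.val - (n - k), lt_of_le_of_lt (Nat.sub_le _ _) pr.2.isLt⟩ : Fin n) : Fin n)).val
          + (n - k) := by
      conv_lhs => rw [e2]
      exact hcD ⟨pr.2.val - (n - k), lt_of_le_of_lt (Nat.sub_le _ _) pr.2.isLt⟩ (by
        show pr.2.val - (n - k) < k; omega)
    have h3' := Fin.lt_def.mp h3
    clear e1 e2
    rw [Fin.lt_def]
    omega
  · rintro qr hqr
    simp only [Inv2, Inv0, Finset.mem_filter, Finset.mem_univ, true_and] at hqr ⊢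
    obtain ⟨h1, h2, h3⟩ := hqr
    have h12 := Fin.lt_def.mp h1
    have hq1 : qr.1.val < k := lt_trans h12 h2
    have m1 : (qr.1.val + (n - k)) % n = qr.1.val + (n - k) := Nat.mod_eq_of_lt (by omega)
    have m2 : (qr.2.val + (n - k)) % n = qr.2.val + (n - k) := Nat.mod_eq_of_lt (by omega)
    have d1 := hcD qr.1 hq1
    have d2 := hcD qr.2 h2
    have h3' := Fin.lt_def.mp h3
    refine ⟨Fin.mk_lt_mk.mpr ?_, ?_, ?_⟩
    · rw [m1, m2]; omega
    · show n - k ≤ (qr.1.val + (n - k)) % n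
      rw [m1]; omega
    · have e1 : (⟨(qr.1.val + (n - k)) % n, Nat.mod_lt _ qr.1.pos⟩ : Fin n)
          = ⟨qr.1.val + (n - k), by omega⟩ := Fin.ext m1
      have e2 : (⟨(qr.2.val + (n - k)) % n, Nat.mod_lt _ qr.2.pos⟩ : Fin n)
          = ⟨qr.2.val + (n - k), by omega⟩ := Fin.ext m2
      rw [e1, e2, Fin.lt_def]
      omega
  · rintro pr hpr
    simp only [Inv2, Finset.mem_filter, Finset.mem_univ, true_and] at hpr
    obtain ⟨h1, h2, h3⟩ := hpr
    have hp1 := pr.1.isLt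
    have hp2 := pr.2.isLt
    have h12 := Fin.lt_def.mp h1
    refine Prod.ext (Fin.ext ?_) (Fin.ext ?_)
    · exact show (pr.1.val - (n - k) + (n - k)) % n = pr.1.val by
        rw [Nat.mod_eq_of_lt (by omega)]; omega
    · exact show (pr.2.val - (n - k) + (n - k)) % n = pr.2.val by
        rw [Nat.mod_eq_of_lt (by omega)]; omega
  · rintro qr hqr
    simp only [Inv0, Finset.mem_filter, Finset.mem_univ, true_and] at hqr
    obtain ⟨h1, h2, h3⟩ := hqr
    have h12 := Fin.lt_def.mp h1
    have hq1 : qr.1.val < k := lt_trans h12 h2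
    have hn1 := qr.1.isLt
    refine Prod.ext (Fin.ext ?_) (Fin.ext ?_)
    · exact show (qr.1.val + (n - k)) % n - (n - k) = qr.1.val by
        rw [Nat.mod_eq_of_lt (by omega)]; omega
    · exact show (qr.2.val + (n - k)) % n - (n - k) = qr.2.val by
        rw [Nat.mod_eq_of_lt (by omega)]; omega

end Stmt5
namespace Stmt5
variable {n k : ℕ}
def fixUpper (n k : ℕ) : Subgroup (Equiv.Perm (Fin n)) where
  carrier := {π | ∀ x : Fin n, k ≤ x.val → π x = x}
  one_mem' := fun x _ => rfl
  mul_mem' := by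
    intro a b ha hb x hx
    simp only [Set.mem_setOf_eq] at ha hb
    show a (b x) = x
    rw [hb x hx, ha x hx]
  inv_mem' := by
    intro a ha x hx
    simp only [Set.mem_setOf_eq] at ha
    show a⁻¹ x = x
    conv_lhs => rw [← ha x hx]
    exact Equiv.Perm.inv_apply_self a x

def diagSub (n k : ℕ) (hkn : 2 * k ≤ n) : Subgroup (Equiv.Perm (Fin n)) where
  carrier := {π | (∀ x : Fin n, blkN n k ((π x : Fin n)).val = blkN n k x.val) ∧
    ∀ x : Fin n, (hx : x.val < k) →
      ((π (⟨x.val + (n - k), by omega⟩ : Fin n) : Fin n)).val = ((π x : Fin n)).val + (n - k)}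
  one_mem' := ⟨fun _ => rfl, fun _ _ => rfl⟩
  mul_mem' := by
    rintro a b ⟨ha1, ha2⟩ ⟨hb1, hb2⟩
    constructor
    · intro x
      show blkN n k ((a (b x) : Fin n)).val = blkN n k x.val
      rw [ha1 (b x), hb1 x]
    · intro x hx
      show ((a (b ⟨x.val + (n - k), _⟩) : Fin n)).val = ((a (b x) : Fin n)).val + (n - k)
      have hbx : ((b x : Fin n)).val < k := by
        have := hb1 x
        simp only [blkN] at this
        split_ifs at this <;> omega
      have e : b ⟨x.val + (n - k), by omega⟩ = ⟨((b x : Fin n)).val + (n - k), by omega⟩ :=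
        Fin.ext (hb2 x hx)
      rw [e]
      exact ha2 (b x) hbx
  inv_mem' := by
    rintro a ⟨h1, h2⟩
    have h1' : ∀ x : Fin n, blkN n k ((a⁻¹ x : Fin n)).val = blkN n k x.val := by
      intro x
      have := h1 (a⁻¹ x)
      rw [Equiv.Perm.apply_inv_self] at this
      exact this.symm
    constructor
    · exact h1'
    · intro x hx
      have hy : ((a⁻¹ x : Fin n)).val < k := by
        have := h1' x
        simp only [blkN] at this
        split_ifs at this <;> omega
      have e : a ⟨((a⁻¹ x : Fin n)).val + (n - k), by omega⟩ = ⟨x.val + (n - k), by omega⟩ := by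
        apply Fin.ext
        rw [h2 (a⁻¹ x) hy, Equiv.Perm.apply_inv_self]
      show ((a⁻¹ (⟨x.val + (n - k), _⟩ : Fin n) : Fin n)).val = ((a⁻¹ x : Fin n)).val + (n - k)
      rw [← e, Equiv.Perm.inv_apply_self]

end Stmt5
namespace Stmt5
variable {n k : ℕ}

lemma sT_eq_swap (i : ℕ) (h1 : 1 ≤ i) (h2 : i < n) :
    sT n i = Equiv.swap (⟨i - 1, by omega⟩ : Fin n) (⟨i, h2⟩ : Fin n) := by
  rw [sT, dif_pos ⟨h1, h2⟩]

lemma swap_mk_val (a b : ℕ) (ha : a < n) (hb : b < n) (x : Fin n) :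
    ((Equiv.swap (⟨a, ha⟩ : Fin n) (⟨b, hb⟩ : Fin n) x : Fin n)).val =
      if x.val = a then b else if x.val = b then a else x.val := by
  simp only [Equiv.swap_apply_def, Fin.ext_iff, Fin.val_mk]
  split_ifs <;> simp_all <;> omega

lemma gen1_mem (hkn : 2 * k ≤ n) (j : ℕ) (hj1 : 1 ≤ j) (hj2 : j ≤ k - 1) :
    sT n j * sT n (n - k + j) ∈ diagSub n k hkn := by
  have hk2 : 2 ≤ k := by omega
  have hjn : j < n := by omega
  have hnkj : n - k + j < n := by omega
  rw [sT_eq_swap j hj1 hjn, sT_eq_swap (n - k + j) (by omega) hnkj]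
  have S1 := swap_mk_val (n := n) (j - 1) j (by omega) hjn
  have S2 := swap_mk_val (n := n) (n - k + j - 1) (n - k + j) (by omega) hnkj
  constructor
  · intro x
    have hx := x.isLt
    simp only [Equiv.Perm.mul_apply, S2, S1, Fin.val_mk]
    simp only [blkN]
    split_ifs <;> omega
  · intro x hx
    have hxn : x.val + (n - k) < n := by omega
    simp only [Equiv.Perm.mul_apply, S2, S1, Fin.val_mk]
    split_ifs <;> omega

lemma gen2_mem (hkn : 2 * k ≤ n) (i : ℕ) (hi1 : k + 1 ≤ i) (hi2 : i ≤ n - k - 1) :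
    sT n i ∈ diagSub n k hkn := by
  have hin : i < n := by omega
  have hi0 : 1 ≤ i := by omega
  rw [sT_eq_swap i hi0 hin]
  have S := swap_mk_val (n := n) (i - 1) i (by omega) hin
  constructor
  · intro x
    have hx := x.isLt
    simp only [S, Fin.val_mk]
    simp only [blkN]
    split_ifs <;> omega
  · intro x hx
    have hxn : x.val + (n - k) < n := by omega
    simp only [S, Fin.val_mk]
    split_ifs <;> omega

lemma genW_mem (hkn : 2 * k ≤ n) (i : ℕ) (hi1 : 1 ≤ i) (hi2 : i ≤ k - 1) :
    sT n i ∈ fixUpper n k := by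
  have hk2 : 2 ≤ k := by omega
  have hin : i < n := by omega
  rw [sT_eq_swap i hi1 hin]
  have S := swap_mk_val (n := n) (i - 1) i (by omega) hin
  intro x hx
  apply Fin.ext
  rw [S]
  split_ifs <;> omega

end Stmt5

open Stmt5

/-- `W(C_k) = ⟨s_j s_{n-k+j} (1 ≤ j ≤ k-1), s_i (k+1 ≤ i ≤ n-k-1)⟩`.  If `σ ∈ Z_k`
(minimal coset representative of `S_n/W(L)`) and `α ∈ W_k = ⟨s_1,…,s_{k-1}⟩`, then `σα`
has minimal length in its left coset `σα·W(C_k)`. -/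
theorem stmt_5 (n k : ℕ) (h : 2 * k ≤ n) (σ α : Equiv.Perm (Fin n))
    (hσ : ∀ i : ℕ, 1 ≤ i → i < n → i ≠ k → i ≠ n - k →
      permLength n (σ * sT n i) = permLength n σ + 1)
    (hα : α ∈ Subgroup.closure
      {w : Equiv.Perm (Fin n) | ∃ i : ℕ, 1 ≤ i ∧ i ≤ k - 1 ∧ w = sT n i}) :
    ∀ w : Equiv.Perm (Fin n),
      (σ * α)⁻¹ * w ∈ Subgroup.closure
        ({w' : Equiv.Perm (Fin n) | ∃ j : ℕ, 1 ≤ j ∧ j ≤ k - 1 ∧ w' = sT n j * sT n (n - k + j)} ∪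
          {w' : Equiv.Perm (Fin n) | ∃ i : ℕ, k + 1 ≤ i ∧ i ≤ n - k - 1 ∧ w' = sT n i}) →
      permLength n (σ * α) ≤ permLength n w := by
  intro w hw
  classical
  -- α fixes everything at positions ≥ k
  have hαfix : ∀ x : Fin n, k ≤ x.val → α x = x := by
    have hle : Subgroup.closure
        {w : Equiv.Perm (Fin n) | ∃ i : ℕ, 1 ≤ i ∧ i ≤ k - 1 ∧ w = sT n i} ≤ fixUpper n k := by
      rw [Subgroup.closure_le]
      rintro g ⟨i, hi1, hi2, rfl⟩
      exact genW_mem h i hi1 hi2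
    exact fun x hx => hle hα x hx
  -- α preserves blocks
  have hαblk : ∀ x : Fin n, blkN n k ((α x : Fin n)).val = blkN n k x.val := by
    intro x
    by_cases hx : x.val < k
    · have h0 : ((α x : Fin n)).val < k := by
        by_contra hge
        have h1 := hαfix (α x) (le_of_not_gt hge)
        have h2 := α.injective h1
        rw [h2] at hge
        omega
      simp only [blkN]
      split_ifs <;> omega
    · rw [hαfix x (le_of_not_gt hx)]
  have hσsorted := sigma_sorted h σ hσ
  set c := (σ * α)⁻¹ * w with hcdef
  have hcmem : c ∈ diagSub n k h := by
    refine (Subgroup.closure_le _).mpr ?_ hw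
    rintro g (⟨j, hj1, hj2, rfl⟩ | ⟨i, hi1, hi2, rfl⟩)
    · exact gen1_mem h j hj1 hj2
    · exact gen2_mem h i hi1 hi2
  have hprop : (∀ x : Fin n, blkN n k ((c x : Fin n)).val = blkN n k x.val) ∧
      ∀ x : Fin n, (hx : x.val < k) →
        ((c (⟨x.val + (n - k), by omega⟩ : Fin n) : Fin n)).val
          = ((c x : Fin n)).val + (n - k) := hcmem
  have hc0 : ∀ v : Fin n, v.val < k → ((c v : Fin n)).val < k := by
    intro v hv
    have := hprop.1 v
    simp only [blkN] at this
    split_ifs at this <;> omega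
  have hα0 : ∀ v : Fin n, v.val < k → ((α v : Fin n)).val < k := by
    intro v hv
    have := hαblk v
    simp only [blkN] at this
    split_ifs at this <;> omega
  have hw2 : w = σ * (α * c) := by
    rw [hcdef]
    group
  have hαc_blk : ∀ x : Fin n, blkN n k (((α * c) x : Fin n)).val = blkN n k x.val := by
    intro x
    rw [Equiv.Perm.mul_apply, hαblk (c x), hprop.1 x]
  have hL1 : permLength n (σ * α) = permLength n σ + permLength n α :=
    permLength_mul_of_sorted σ α hσsorted hαblk
  have hL2 : permLength n w = permLength n σ + permLength n (α * c) := by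
    rw [hw2]
    exact permLength_mul_of_sorted σ (α * c) hσsorted hαc_blk
  -- all inversions of α live in block 0
  have hαInv : Invs n α = Inv0 n k α := by
    ext pr
    simp only [Invs, Inv0, Finset.mem_filter, Finset.mem_univ, true_and]
    constructor
    · rintro ⟨h1, h2⟩
      refine ⟨h1, ?_, h2⟩
      by_contra hge
      have hge' : k ≤ pr.2.val := le_of_not_gt hge
      rw [hαfix pr.2 hge'] at h2
      by_cases hp1 : pr.1.val < k
      · have := hα0 pr.1 hp1
        have := Fin.lt_def.mp h2
        omega
      · rw [hαfix pr.1 (le_of_not_gt hp1)] at h2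
        exact absurd h1 (not_lt.mpr h2.le)
    · rintro ⟨h1, _, h2⟩
      exact ⟨h1, h2⟩
  -- Inv2 of α*c is Inv2 of c
  have hs4 : Inv2 n k (α * c) = Inv2 n k c := by
    ext pr
    simp only [Inv2, Finset.mem_filter, Finset.mem_univ, true_and]
    simp only [Equiv.Perm.mul_apply]
    have hfix : ∀ q : Fin n, n - k ≤ q.val → α (c q) = c q := by
      intro q hq
      apply hαfix
      have := hprop.1 q
      simp only [blkN] at this
      split_ifs at this <;> omega
    constructor
    · rintro ⟨h1, h2, h3⟩
      refine ⟨h1, h2, ?_⟩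
      have e1 := hfix pr.1 h2
      have e2 := hfix pr.2 (by have := Fin.lt_def.mp h1; omega)
      rwa [e1, e2] at h3
    · rintro ⟨h1, h2, h3⟩
      refine ⟨h1, h2, ?_⟩
      have e1 := hfix pr.1 h2
      have e2 := hfix pr.2 (by have := Fin.lt_def.mp h1; omega)
      rwa [e1, e2]
  -- disjointness of Inv0 and Inv2
  have hdisj : Disjoint (Inv0 n k (α * c)) (Inv2 n k (α * c)) := by
    rw [Finset.disjoint_left]
    intro pr h0 h2'
    simp only [Inv0, Inv2, Finset.mem_filter, Finset.mem_univ, true_and] at h0 h2'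
    have := Fin.lt_def.mp h0.1
    have h01 := h0.2.1
    have h21 := h2'.2.1
    have := pr.1.isLt
    omega
  have hsub : Inv0 n k (α * c) ∪ Inv2 n k (α * c) ⊆ Invs n (α * c) := by
    intro pr hpr
    rcases Finset.mem_union.mp hpr with hp | hp <;>
      simp only [Inv0, Inv2, Invs, Finset.mem_filter, Finset.mem_univ, true_and] at hp ⊢ <;>
      exact ⟨hp.1, hp.2.2⟩
  have key : permLength n α ≤ permLength n (α * c) := by
    have e0 : Inv0 n k α = Inv0 n k ((α * c) * c⁻¹) := by
      congr 1
      group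
    have s1 : (Inv0 n k ((α * c) * c⁻¹)).card ≤
        (Inv0 n k (α * c)).card + (Inv0 n k c⁻¹).card :=
      Inv0_mul_le (α * c) c⁻¹ (inv_pres0 hc0)
    have s2 : (Inv0 n k c⁻¹).card = (Inv0 n k c).card := Inv0_inv c hc0
    have s3 : (Inv2 n k c).card = (Inv0 n k c).card := Inv2_eq_Inv0 h c hc0 hprop.2
    have s5 : (Inv0 n k (α * c)).card + (Inv2 n k (α * c)).card ≤ (Invs n (α * c)).card := by
      rw [← Finset.card_union_of_disjoint hdisj]
      exact Finset.card_le_card hsub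
    rw [permLength_eq, permLength_eq, hαInv, e0]
    rw [hs4] at s5
    omega
  omega
end

section
/- A matrix u with u² = 0 and rk(u) = k lies in the B-orbit of x_k (B the upper-triangular Borel in GL_n) if and only if Ker(u) = span(e_1,…,e_{n-k}) and u(span(e_{n-k+1},…,e_{n-k+j})) = span(e_1,…,e_j) for all j = 1,…,k. -/
open Matrix

/-- The span of the standard basis vectors `e_i`, `i ∈ S`. -/
def coordSpan (K : Type*) [Field K] (n : ℕ) (S : Set (Fin n)) : Submodule K (Fin n → K) where
  carrier := {v | ∀ i, i ∉ S → v i = 0}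
  add_mem' := by intro a b ha hb i hi; simp [Pi.add_apply, ha i hi, hb i hi]
  zero_mem' := by intro i _; rfl
  smul_mem' := by intro c a ha i hi; simp [Pi.smul_apply, ha i hi]

namespace Stmt8Aux
variable {K : Type*} [Field K] {n k : ℕ}

lemma mem_coordSpan {S : Set (Fin n)} {v : Fin n → K} :
    v ∈ coordSpan K n S ↔ ∀ i, i ∉ S → v i = 0 := Iff.rfl

lemma xk_mulVec (v : Fin n → K) (r : Fin n) :
    (xk K n k).mulVec v r = if h : (r:ℕ) + (n-k) < n then v ⟨(r:ℕ)+(n-k), h⟩ else 0 := by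
  simp only [Matrix.mulVec, dotProduct, xk]
  split
  next h =>
    rw [Finset.sum_eq_single (⟨(r:ℕ)+(n-k), h⟩ : Fin n)]
    · simp
    · intro c _ hc
      rw [if_neg, zero_mul]
      intro he; exact hc (Fin.ext he.symm)
    · simp
  next h =>
    apply Finset.sum_eq_zero
    intro c _
    rw [if_neg, zero_mul]
    intro he; exact h (he ▸ c.isLt)

lemma mul_xk (A : Matrix (Fin n) (Fin n) K) (i c : Fin n) :
    (A * xk K n k) i c =
      if h : n - k ≤ (c:ℕ) then A i ⟨(c:ℕ)-(n-k), lt_of_le_of_lt (Nat.sub_le _ _) c.isLt⟩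
      else 0 := by
  simp only [Matrix.mul_apply, xk]
  split
  next h =>
    rw [Finset.sum_eq_single (⟨(c:ℕ)-(n-k), lt_of_le_of_lt (Nat.sub_le _ _) c.isLt⟩ : Fin n)]
    · rw [if_pos (by simp; omega), mul_one]
    · intro m _ hm
      rw [if_neg, mul_zero]
      intro he
      exact hm (Fin.ext (show (m:ℕ) = (c:ℕ)-(n-k) by omega))
    · simp
  next h =>
    apply Finset.sum_eq_zero
    intro m _
    rw [if_neg (by omega), mul_zero]

lemma tri_mulVec {P : Matrix (Fin n) (Fin n) K} (hP : ∀ i j : Fin n, j < i → P i j = 0)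
    {m : ℕ} {v : Fin n → K} (hv : ∀ i : Fin n, ¬ (i:ℕ) < m → v i = 0)
    (i : Fin n) (hi : ¬ (i:ℕ) < m) : P.mulVec v i = 0 := by
  simp only [Matrix.mulVec, dotProduct]
  apply Finset.sum_eq_zero
  intro c _
  by_cases hc : (c:ℕ) < m
  · rw [hP i c (Fin.lt_def.mpr (lt_of_lt_of_le hc (not_lt.1 hi))), zero_mul]
  · rw [hv c hc, mul_zero]

end Stmt8Aux

/-- `u ∈ O_k` lies in the `B`-orbit of `x_k` (`B` = upper-triangular Borel) iff
`Ker(u) = span(e_1,…,e_{n-k})` and `u(span(e_{n-k+1},…,e_{n-k+j})) = span(e_1,…,e_j)`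
for all `j = 1,…,k`. -/
theorem stmt_8 (K : Type*) [Field K] (n k : ℕ) (h : 2 * k ≤ n)
    (u : Matrix (Fin n) (Fin n) K) (hu : u * u = 0) (hrk : u.rank = k) :
    (∃ b : GL (Fin n) K,
        (∀ i j : Fin n, j < i → (b : Matrix (Fin n) (Fin n) K) i j = 0) ∧
        u = (b : Matrix (Fin n) (Fin n) K) * xk K n k *
              ((b⁻¹ : GL (Fin n) K) : Matrix (Fin n) (Fin n) K)) ↔
      (LinearMap.ker u.mulVecLin = coordSpan K n {i | (i : ℕ) < n - k} ∧
        ∀ j : ℕ, 1 ≤ j → j ≤ k →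
          Submodule.map u.mulVecLin
              (coordSpan K n {i | n - k ≤ (i : ℕ) ∧ (i : ℕ) < n - k + j}) =
            coordSpan K n {i | (i : ℕ) < j}) := by
  classical
  constructor
  · rintro ⟨b, hb, rfl⟩
    set P : Matrix (Fin n) (Fin n) K := (b : Matrix (Fin n) (Fin n) K) with hPdef
    set Q : Matrix (Fin n) (Fin n) K := ((b⁻¹ : GL (Fin n) K) : Matrix (Fin n) (Fin n) K)
      with hQdef
    have hPQ : P * Q = 1 := Units.mul_inv b
    have hQP : Q * P = 1 := Units.inv_mul b
    have hdet : IsUnit P.det := (Matrix.isUnit_iff_isUnit_det P).1 b.isUnit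
    have hQtri : ∀ i j : Fin n, j < i → Q i j = 0 := by
      have hQinv : Q = P⁻¹ := Matrix.coe_units_inv b
      haveI := P.invertibleOfIsUnitDet hdet
      intro i j hij
      rw [hQinv]
      exact Matrix.blockTriangular_inv_of_blockTriangular
        (fun i j hij => hb i j hij) hij
    have humv : ∀ v : Fin n → K,
        (P * xk K n k * Q).mulVec v = P.mulVec ((xk K n k).mulVec (Q.mulVec v)) := by
      intro v
      simp [Matrix.mulVec_mulVec, mul_assoc]
    have hPQv : ∀ w : Fin n → K, P.mulVec (Q.mulVec w) = w := by
      intro w; rw [Matrix.mulVec_mulVec, hPQ, Matrix.one_mulVec]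
    have hQPv : ∀ w : Fin n → K, Q.mulVec (P.mulVec w) = w := by
      intro w; rw [Matrix.mulVec_mulVec, hQP, Matrix.one_mulVec]
    have hker1 : ∀ v : Fin n → K, (∀ i : Fin n, ¬ (i:ℕ) < n-k → v i = 0) →
        (P * xk K n k * Q).mulVec v = 0 := by
      intro v hv
      rw [humv]
      have h1 : (xk K n k).mulVec (Q.mulVec v) = 0 := by
        funext r
        rw [Stmt8Aux.xk_mulVec]
        split
        next hlt => exact Stmt8Aux.tri_mulVec hQtri hv _ (not_lt.2 (Nat.le_add_left _ _))
        next => rfl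
      rw [h1, Matrix.mulVec_zero]
    have hker2 : ∀ v : Fin n → K, (P * xk K n k * Q).mulVec v = 0 →
        ∀ i : Fin n, ¬ (i:ℕ) < n-k → v i = 0 := by
      intro v hv i hi
      rw [humv] at hv
      have hx : (xk K n k).mulVec (Q.mulVec v) = 0 := by
        have := congrArg Q.mulVec hv
        rwa [hQPv, Matrix.mulVec_zero] at this
      have hQv : ∀ i : Fin n, ¬ (i:ℕ) < n-k → Q.mulVec v i = 0 := by
        intro i hi2
        have hr : (i:ℕ) - (n-k) < n := lt_of_le_of_lt (Nat.sub_le _ _) i.isLt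
        have hval := congrFun hx (⟨(i:ℕ)-(n-k), hr⟩ : Fin n)
        rw [Stmt8Aux.xk_mulVec] at hval
        rw [dif_pos (show (i:ℕ)-(n-k)+(n-k) < n by omega)] at hval
        rwa [show (⟨(i:ℕ)-(n-k)+(n-k), show (i:ℕ)-(n-k)+(n-k) < n by omega⟩ : Fin n) = i from
          Fin.ext (show (i:ℕ)-(n-k)+(n-k) = (i:ℕ) by omega)] at hval
      have : v = P.mulVec (Q.mulVec v) := (hPQv v).symm
      rw [this]
      exact Stmt8Aux.tri_mulVec hb hQv i hi
    refine ⟨?_, ?_⟩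
    · ext v
      simp only [LinearMap.mem_ker, Matrix.mulVecLin_apply]
      rw [Stmt8Aux.mem_coordSpan]
      constructor
      · intro hv i hi
        exact hker2 v hv i hi
      · intro hv
        exact hker1 v hv
    · intro j hj1 hjk
      apply le_antisymm
      · rintro w ⟨v, hv, rfl⟩
        rw [Stmt8Aux.mem_coordSpan]
        intro i hi
        have hv' : ∀ i : Fin n, ¬ (i:ℕ) < n-k+j → v i = 0 := by
          intro i hi'
          exact hv i (fun hmem => hi' hmem.2)
        have hQv : ∀ i : Fin n, ¬ (i:ℕ) < n-k+j → Q.mulVec v i = 0 :=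
          Stmt8Aux.tri_mulVec hQtri hv'
        have hxQv : ∀ r : Fin n, ¬ (r:ℕ) < j → (xk K n k).mulVec (Q.mulVec v) r = 0 := by
          intro r hr
          rw [Stmt8Aux.xk_mulVec]
          split
          next hlt => exact hQv _ (show ¬ (r:ℕ)+(n-k) < n-k+j by omega)
          next => rfl
        rw [Matrix.mulVecLin_apply, humv]
        exact Stmt8Aux.tri_mulVec hb hxQv i hi
      · intro w hw
        have hw' : ∀ i : Fin n, ¬ (i:ℕ) < j → w i = 0 := hw
        have hQw : ∀ i : Fin n, ¬ (i:ℕ) < j → Q.mulVec w i = 0 :=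
          Stmt8Aux.tri_mulVec hQtri hw'
        obtain ⟨x, hx0, hxkx⟩ : ∃ x : Fin n → K,
            (∀ i : Fin n, ¬ ((n-k ≤ (i:ℕ)) ∧ (i:ℕ) < n-k+j) → x i = 0) ∧
            (xk K n k).mulVec x = Q.mulVec w := by
          refine ⟨fun i => if (n-k ≤ (i:ℕ)) ∧ ((i:ℕ) < n-k+j) then
            Q.mulVec w ⟨(i:ℕ)-(n-k), lt_of_le_of_lt (Nat.sub_le _ _) i.isLt⟩ else 0, ?_, ?_⟩
          · intro i hi
            exact if_neg hi
          · funext r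
            rw [Stmt8Aux.xk_mulVec]
            split
            next hlt =>
              by_cases hrj : (r:ℕ) < j
              · rw [if_pos (show n-k ≤ (r:ℕ)+(n-k) ∧ (r:ℕ)+(n-k) < n-k+j from
                  ⟨Nat.le_add_left _ _, by omega⟩)]
                congr 1
                exact Fin.ext (show (r:ℕ)+(n-k)-(n-k) = (r:ℕ) by omega)
              · rw [if_neg (show ¬ (n-k ≤ (r:ℕ)+(n-k) ∧ (r:ℕ)+(n-k) < n-k+j) from
                  fun hc => hrj (by omega))]
                exact (hQw r hrj).symm
            next hlt =>
              exact (hQw r (by omega)).symm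
        have hx' : ∀ i : Fin n, ¬ (i:ℕ) < n-k+j → x i = 0 :=
          fun i hi => hx0 i (fun hc => hi hc.2)
        have hPx : ∀ i : Fin n, ¬ (i:ℕ) < n-k+j → P.mulVec x i = 0 :=
          Stmt8Aux.tri_mulVec hb hx'
        have huPx : (P * xk K n k * Q).mulVec (P.mulVec x) = w := by
          rw [humv, hQPv, hxkx, hPQv]
        set v1 : Fin n → K := fun i => if (i:ℕ) < n-k then P.mulVec x i else 0 with hv1def
        set v2 : Fin n → K := fun i => if (i:ℕ) < n-k then 0 else P.mulVec x i with hv2def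
        have hv1zero : (P * xk K n k * Q).mulVec v1 = 0 := by
          apply hker1
          intro i hi
          exact if_neg hi
        have hsum : v1 + v2 = P.mulVec x := by
          funext i
          by_cases hi : (i:ℕ) < n-k <;> simp [hv1def, hv2def, hi]
        refine ⟨v2, ?_, ?_⟩
        · intro i hi
          show (if (i:ℕ) < n-k then 0 else P.mulVec x i) = 0
          by_cases hik : (i:ℕ) < n-k
          · rw [if_pos hik]
          · rw [if_neg hik]
            apply hPx
            intro hlt
            exact hi ⟨by omega, hlt⟩
        · rw [Matrix.mulVecLin_apply]
          have := congrArg (P * xk K n k * Q).mulVec hsum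
          rw [Matrix.mulVec_add, hv1zero, zero_add, huPx] at this
          exact this
  · rintro ⟨h1, h2⟩
    have hkercol : ∀ c : Fin n, (c:ℕ) < n-k → u.mulVec (Pi.single c 1) = 0 := by
      intro c hc
      have hmem : (Pi.single c 1 : Fin n → K) ∈ coordSpan K n {i | (i:ℕ) < n-k} := by
        intro i hi
        exact Pi.single_eq_of_ne (fun hic => hi (by rw [Set.mem_setOf_eq, hic]; exact hc)) 1
      rw [← h1] at hmem
      have := LinearMap.mem_ker.1 hmem
      rwa [Matrix.mulVecLin_apply] at this
    have hcol : ∀ c : Fin n, n-k ≤ (c:ℕ) → ∃ v : Fin n → K,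
        (∀ i : Fin n, ¬ ((n-k ≤ (i:ℕ)) ∧ (i:ℕ) ≤ (c:ℕ)) → v i = 0) ∧
        u.mulVec v = Pi.single
          (⟨(c:ℕ)-(n-k), lt_of_le_of_lt (Nat.sub_le _ _) c.isLt⟩ : Fin n) 1 := by
      intro c hc
      have hjk : (c:ℕ)-(n-k)+1 ≤ k := by
        have := c.isLt
        omega
      have hmap := h2 ((c:ℕ)-(n-k)+1) (by omega) hjk
      have he : (Pi.single (⟨(c:ℕ)-(n-k), lt_of_le_of_lt (Nat.sub_le _ _) c.isLt⟩ : Fin n) 1 :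
          Fin n → K) ∈ coordSpan K n {i | (i:ℕ) < (c:ℕ)-(n-k)+1} := by
        intro i hi
        apply Pi.single_eq_of_ne
        intro hie
        apply hi
        rw [Set.mem_setOf_eq, hie]
        exact Nat.lt_succ_self _
      rw [← hmap] at he
      obtain ⟨v, hv, hv2⟩ := he
      refine ⟨v, ?_, ?_⟩
      · intro i hi
        apply hv i
        intro hmem
        exact hi ⟨hmem.1, by have := hmem.2; omega⟩
      · rw [← Matrix.mulVecLin_apply]
        exact hv2
    set col : Fin n → Fin n → K := fun c =>
      if hc : n-k ≤ (c:ℕ) then (hcol c hc).choose else Pi.single c 1 with hcoldef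
    have hcol_lo : ∀ c : Fin n, ¬ n-k ≤ (c:ℕ) → col c = Pi.single c 1 := by
      intro c hc; rw [hcoldef]; exact dif_neg hc
    have hcol_hi : ∀ c : Fin n, (hc : n-k ≤ (c:ℕ)) → col c = (hcol c hc).choose := by
      intro c hc; rw [hcoldef]; exact dif_pos hc
    set b : Matrix (Fin n) (Fin n) K := Matrix.of fun i c => col c i with hbdef
    have hbtri : ∀ i c : Fin n, c < i → b i c = 0 := by
      intro i c hci
      show col c i = 0
      by_cases hc : n-k ≤ (c:ℕ)
      · rw [hcol_hi c hc]
        exact (hcol c hc).choose_spec.1 i (fun hm => absurd hm.2 (not_le.2 hci))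
      · rw [hcol_lo c hc]
        refine Pi.single_eq_of_ne ?_ 1
        intro hic
        rw [hic] at hci
        exact absurd hci (lt_irrefl c)
    have hub : u * b = b * xk K n k := by
      ext i c
      rw [Stmt8Aux.mul_xk]
      have hl : (u * b) i c = u.mulVec (col c) i := by
        simp [Matrix.mul_apply, Matrix.mulVec, dotProduct, hbdef]
      split
      next hc =>
        rw [hl, hcol_hi c hc, (hcol c hc).choose_spec.2]
        show _ = col _ i
        rw [hcol_lo _ (show ¬ n-k ≤ (c:ℕ)-(n-k) by omega)]
      next hc =>
        rw [hl, hcol_lo c hc]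
        exact congrFun (hkercol c (by omega)) i
    have hdiag : ∀ c : Fin n, b c c ≠ 0 := by
      intro c
      show col c c ≠ 0
      by_cases hc : n-k ≤ (c:ℕ)
      · rw [hcol_hi c hc]
        intro h0
        obtain ⟨hsupp, himg⟩ := (hcol c hc).choose_spec
        set v := (hcol c hc).choose with hvdef
        have hsupp' : ∀ i : Fin n, ¬ ((n-k ≤ (i:ℕ)) ∧ (i:ℕ) < (c:ℕ)) → v i = 0 := by
          intro i hi
          by_cases hic : (i:ℕ) = (c:ℕ)
          · rw [Fin.ext hic]
            exact h0
          · exact hsupp i (fun hm => hi ⟨hm.1, lt_of_le_of_ne hm.2 hic⟩)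
        by_cases hj0 : (c:ℕ) - (n-k) = 0
        · have hv0 : v = 0 := funext fun i => hsupp' i (fun hm => by omega)
          rw [hv0, Matrix.mulVec_zero] at himg
          have := congrFun himg
            (⟨(c:ℕ)-(n-k), lt_of_le_of_lt (Nat.sub_le _ _) c.isLt⟩ : Fin n)
          rw [Pi.single_eq_same] at this
          exact one_ne_zero this.symm
        · have hmem : v ∈ coordSpan K n
              {i | n-k ≤ (i:ℕ) ∧ (i:ℕ) < n-k + ((c:ℕ)-(n-k))} := by
            intro i hi
            exact hsupp' i (fun hm => hi ⟨hm.1, by omega⟩)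
          have h2' := h2 ((c:ℕ)-(n-k)) (by omega) (by have := c.isLt; omega)
          have hin : u.mulVecLin v ∈ coordSpan K n {i | (i:ℕ) < (c:ℕ)-(n-k)} :=
            h2' ▸ Submodule.mem_map_of_mem hmem
          have hz := hin (⟨(c:ℕ)-(n-k), lt_of_le_of_lt (Nat.sub_le _ _) c.isLt⟩ : Fin n)
            (show ¬ (c:ℕ)-(n-k) < (c:ℕ)-(n-k) from lt_irrefl _)
          rw [Matrix.mulVecLin_apply, himg, Pi.single_eq_same] at hz
          exact one_ne_zero hz
      · rw [hcol_lo c hc, Pi.single_eq_same]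
        exact one_ne_zero
    have hdetb : IsUnit b.det := by
      rw [Matrix.det_of_upperTriangular (fun i j hij => hbtri i j hij)]
      exact isUnit_iff_ne_zero.2 (Finset.prod_ne_zero_iff.2 fun c _ => hdiag c)
    have hbu : IsUnit b := (Matrix.isUnit_iff_isUnit_det b).2 hdetb
    refine ⟨hbu.unit, ?_, ?_⟩
    · intro i j hij
      show (hbu.unit : Matrix (Fin n) (Fin n) K) i j = 0
      rw [hbu.unit_spec]
      exact hbtri i j hij
    · have hinv : ((hbu.unit⁻¹ : GL (Fin n) K) : Matrix (Fin n) (Fin n) K) = b⁻¹ := by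
        rw [Matrix.coe_units_inv, hbu.unit_spec]
      rw [hbu.unit_spec, hinv]
      have hbinv : b * b⁻¹ = 1 := Matrix.mul_nonsing_inv b hdetb
      calc u = u * (b * b⁻¹) := by rw [hbinv, mul_one]
        _ = (u * b) * b⁻¹ := by rw [mul_assoc]
        _ = b * xk K n k * b⁻¹ := by rw [hub]
end

section
/- For any k ≥ 1, the permutation σ = s₂s₁s₃ = (3,1,4,2) ∈ S₄ (in one-line notation, σ(1)=3, σ(2)=1, σ(3)=4, σ(4)=2) contains the pattern (3,1,4,2), and any minimal coset representative σ ∈ Z₁ ⊆ S_n whose maximal coset representative σo₁ contains the pattern (3,4,1,2) must itself contain the pattern (3,1,4,2), and conversely. -/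
/-- `τ` contains the pattern `(3,4,1,2)`: indices `i₁<i₂<i₃<i₄` with
`τ(i₂) > τ(i₁) > τ(i₄) > τ(i₃)`. -/
def pat3412 {n : ℕ} (τ : Equiv.Perm (Fin n)) : Prop :=
  ∃ i₁ i₂ i₃ i₄ : Fin n, i₁ < i₂ ∧ i₂ < i₃ ∧ i₃ < i₄ ∧
    τ i₁ < τ i₂ ∧ τ i₄ < τ i₁ ∧ τ i₃ < τ i₄

/-- `τ` contains the pattern `(3,1,4,2)`: indices `i₁<i₂<i₃<i₄` with
`τ(i₃) > τ(i₁) > τ(i₄) > τ(i₂)`. -/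
def pat3142 {n : ℕ} (τ : Equiv.Perm (Fin n)) : Prop :=
  ∃ i₁ i₂ i₃ i₄ : Fin n, i₁ < i₂ ∧ i₂ < i₃ ∧ i₃ < i₄ ∧
    τ i₁ < τ i₃ ∧ τ i₄ < τ i₁ ∧ τ i₂ < τ i₄

/-- (a) The permutation `(3,1,4,2) ∈ S₄` contains the pattern `(3,1,4,2)`;
(b) for `σ ∈ Z₁` (i.e. `σ(2) < … < σ(n-1)`) and `o₁` the longest element of `W(L)`
(fixing `1` and `n`, reversing `2,…,n-1`), `σ·o₁` contains the pattern `(3,4,1,2)`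
iff `σ` contains the pattern `(3,1,4,2)`. -/
theorem stmt_11 :
    (∀ σ : Equiv.Perm (Fin 4),
      σ 0 = 2 → σ 1 = 0 → σ 2 = 3 → σ 3 = 1 → pat3142 σ) ∧
    ∀ n : ℕ, 4 ≤ n → ∀ σ : Equiv.Perm (Fin n),
      (∀ i j : Fin n, 1 ≤ (i : ℕ) → i < j → (j : ℕ) < n - 1 → σ i < σ j) →
      ∀ o : Equiv.Perm (Fin n),
        (∀ i : Fin n, ((o i : ℕ) =
          if (i : ℕ) = 0 ∨ (i : ℕ) = n - 1 then (i : ℕ) else n - 1 - (i : ℕ))) →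
        (pat3412 (σ * o) ↔ pat3142 σ) := by
  constructor
  · intro σ h0 h1 h2 h3
    refine ⟨0, 1, 2, 3, by decide, by decide, by decide, ?_, ?_, ?_⟩
    · rw [h0, h2]; decide
    · rw [h3, h0]; decide
    · rw [h1, h3]; decide
  · intro n hn σ hσ o ho
    have hz : (0 : ℕ) < n := by omega
    set z : Fin n := ⟨0, hz⟩ with hzdef
    set l : Fin n := ⟨n - 1, by omega⟩ with hldef
    -- o fixes z and l
    have hoz : o z = z := by
      apply Fin.ext
      have := ho z
      rw [if_pos (Or.inl rfl)] at this; exact this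
    have hol : o l = l := by
      apply Fin.ext
      have := ho l
      simp only [hldef] at this ⊢
      rw [this]
      simp
    -- o on middle indices
    have homid : ∀ i : Fin n, 1 ≤ (i : ℕ) → (i : ℕ) ≤ n - 2 → (o i : ℕ) = n - 1 - (i : ℕ) := by
      intro i h1 h2
      have := ho i
      rw [if_neg (by omega)] at this
      exact this
    constructor
    · rintro ⟨j₁, j₂, j₃, j₄, h12, h23, h34, ha, hb, hc⟩
      simp only [Equiv.Perm.mul_apply] at ha hb hc
      rw [Fin.lt_def] at h12 h23 h34
      have hj4 : (j₄ : ℕ) ≤ n - 1 := by omega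
      -- j₁ = 0
      have hj1 : (j₁ : ℕ) = 0 := by
        by_contra h
        have h1 : 1 ≤ (j₁ : ℕ) := by omega
        have hb2 : (j₂ : ℕ) ≤ n - 2 := by omega
        have e1 := homid j₁ h1 (by omega)
        have e2 := homid j₂ (by omega) hb2
        have : σ (o j₂) < σ (o j₁) := by
          apply hσ _ _ (by omega) (by rw [Fin.lt_def]; omega) (by omega)
        exact absurd ha (not_lt.2 this.le)
      -- j₄ = n - 1
      have hj4e : (j₄ : ℕ) = n - 1 := by
        by_contra h
        have h4 : (j₄ : ℕ) ≤ n - 2 := by omega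
        have e3 := homid j₃ (by omega) (by omega)
        have e4 := homid j₄ (by omega) h4
        have : σ (o j₄) < σ (o j₃) := by
          apply hσ _ _ (by omega) (by rw [Fin.lt_def]; omega) (by omega)
        exact absurd hc (not_lt.2 this.le)
      have hj1z : j₁ = z := Fin.ext hj1
      have hj4l : j₄ = l := Fin.ext hj4e
      have e2 := homid j₂ (by omega) (by omega)
      have e3 := homid j₃ (by omega) (by omega)
      refine ⟨z, o j₃, o j₂, l, ?_, ?_, ?_, ?_, ?_, ?_⟩
      · rw [Fin.lt_def]; omega
      · rw [Fin.lt_def]; omega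
      · rw [Fin.lt_def]; omega
      · rw [← hoz, ← hj1z]; exact ha
      · rw [← hoz, ← hol, ← hj1z, ← hj4l]; exact hb
      · rw [← hol, ← hj4l]; exact hc
    · rintro ⟨i₁, i₂, i₃, i₄, h12, h23, h34, ha, hb, hc⟩
      rw [Fin.lt_def] at h12 h23 h34
      have hi4 : (i₄ : ℕ) ≤ n - 1 := by omega
      have hi1 : (i₁ : ℕ) = 0 := by
        by_contra h
        have : σ i₁ < σ i₂ := by
          apply hσ _ _ (by omega) (by rw [Fin.lt_def]; omega) (by omega)
        have : σ i₂ < σ i₂ := lt_trans (lt_trans hc hb) this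
        exact absurd this (lt_irrefl _)
      have hi4e : (i₄ : ℕ) = n - 1 := by
        by_contra h
        have : σ i₃ < σ i₄ := by
          apply hσ _ _ (by omega) (by rw [Fin.lt_def]; omega) (by omega)
        have : σ i₄ < σ i₄ := lt_trans (lt_trans hb ha) this
        exact absurd this (lt_irrefl _)
      have hi1z : i₁ = z := Fin.ext hi1
      have hi4l : i₄ = l := Fin.ext hi4e
      set j₂ : Fin n := ⟨n - 1 - (i₃ : ℕ), by omega⟩ with hj2def
      set j₃ : Fin n := ⟨n - 1 - (i₂ : ℕ), by omega⟩ with hj3def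
      have hoj2 : o j₂ = i₃ := by
        apply Fin.ext
        rw [homid j₂ (by simp [hj2def]; omega) (by simp [hj2def]; omega)]
        simp [hj2def]; omega
      have hoj3 : o j₃ = i₂ := by
        apply Fin.ext
        rw [homid j₃ (by simp [hj3def]; omega) (by simp [hj3def]; omega)]
        simp [hj3def]; omega
      refine ⟨z, j₂, j₃, l, ?_, ?_, ?_, ?_, ?_, ?_⟩
      · rw [Fin.lt_def]; simp [hj2def]; omega
      · rw [Fin.lt_def]; simp [hj2def, hj3def]; omega
      · rw [Fin.lt_def]; simp [hj3def, hldef]; omega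
      · simp only [Equiv.Perm.mul_apply, hoz, hoj2]
        rw [← hi1z] at *; exact ha
      · simp only [Equiv.Perm.mul_apply, hoz, hol]
        rw [← hi1z, ← hi4l]; exact hb
      · simp only [Equiv.Perm.mul_apply, hol, hoj3]
        rw [← hi4l]; exact hc
end

section
/- Let u be an n×n matrix with u² = 0 and rk(u) = 2 (in dimension n = 4), so Im(u) = Ker(u) is 2-dimensional. If u(K²) ⊊ K² where K² = span(e₁,e₂), then there exists a complete flag V¹ ⊂ V² ⊂ V³ in K⁴ with V¹ ⊆ K² ⊆ V³ such that Im(u) ⊆ V² ⊆ Ker(u) and u(V³) ⊆ V¹. (Case analysis: if u(K²) = 0 pick v with w = u(v) ≠ 0 and take V¹ = ⟨w⟩, V² = K², V³ = K² ⊕ ⟨v⟩; if dim u(K²) = 1 take V¹ = u(K²), V² = Im(u), V³ = K² ⊕ ⟨v⟩ for suitable v.) -/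
open Matrix

def K2 (K : Type*) [Field K] : Submodule K (Fin 4 → K) :=
  Submodule.span K {Pi.single (0 : Fin 4) (1 : K), Pi.single (1 : Fin 4) (1 : K)}

lemma K2_finrank (K : Type*) [Field K] : Module.finrank K (K2 K) = 2 := by
  have hset : ({Pi.single (0 : Fin 4) (1 : K), Pi.single (1 : Fin 4) (1 : K)} : Set (Fin 4 → K))
      = Set.range ![Pi.single (0 : Fin 4) (1 : K), Pi.single (1 : Fin 4) (1 : K)] := by
    ext x
    simp [Matrix.range_cons, Matrix.range_empty]
    tauto
  have hind : LinearIndependent K ![(Pi.single (0 : Fin 4) (1 : K) : Fin 4 → K), (Pi.single (1 : Fin 4) (1 : K) : Fin 4 → K)] := by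
    rw [LinearIndependent.pair_iff]
    intro s t h
    have h0 := congrFun h 0
    have h1 := congrFun h 1
    simp [Pi.single_apply] at h0 h1
    exact ⟨h0, h1⟩
  rw [K2, hset, finrank_span_eq_card hind]
  simp

/-- If `u² = 0`, `rk u = 2` on `K⁴` and `u(K²) ⊊ K²`, then there is a complete flag
`V¹ ⊂ V² ⊂ V³` with `V¹ ⊆ K² ⊆ V³`, `Im(u) ⊆ V² ⊆ Ker(u)` and `u(V³) ⊆ V¹`. -/
theorem stmt_14 (K : Type*) [Field K] [IsAlgClosed K] (u : Matrix (Fin 4) (Fin 4) K)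
    (hu : u * u = 0) (hrk : u.rank = 2)
    (hlt : Submodule.map u.mulVecLin (K2 K) < K2 K) :
    ∃ V1 V2 V3 : Submodule K (Fin 4 → K),
      Module.finrank K V1 = 1 ∧ Module.finrank K V2 = 2 ∧ Module.finrank K V3 = 3 ∧
      V1 ≤ V2 ∧ V2 ≤ V3 ∧ V1 ≤ K2 K ∧ K2 K ≤ V3 ∧
      LinearMap.range u.mulVecLin ≤ V2 ∧ V2 ≤ LinearMap.ker u.mulVecLin ∧
      Submodule.map u.mulVecLin V3 ≤ V1 := by
  set f := u.mulVecLin with hfdef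
  set W := K2 K with hWdef
  have hff : f ∘ₗ f = 0 := by
    rw [hfdef, ← Matrix.mulVecLin_mul, hu, Matrix.mulVecLin_zero]
  have hle : LinearMap.range f ≤ LinearMap.ker f := LinearMap.range_le_ker_iff.mpr hff
  have hrange : Module.finrank K (LinearMap.range f) = 2 := hrk
  have hdim : Module.finrank K (Fin 4 → K) = 4 := by simp
  have hker : Module.finrank K (LinearMap.ker f) = 2 := by
    have := LinearMap.finrank_range_add_finrank_ker f
    rw [hrange, hdim] at this
    omega
  have heq : LinearMap.range f = LinearMap.ker f :=
    Submodule.eq_of_le_of_finrank_eq hle (by rw [hrange, hker])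
  have hW2 : Module.finrank K W = 2 := K2_finrank K
  have hmapker : Submodule.map f (LinearMap.range f) = ⊥ := by
    rw [Submodule.eq_bot_iff]
    rintro x ⟨y, hy, rfl⟩
    exact LinearMap.mem_ker.mp (hle hy)
  have hdlt : Module.finrank K (Submodule.map f W) < 2 := by
    rw [← hW2]
    exact Submodule.finrank_lt_finrank_of_lt hlt
  interval_cases hd : Module.finrank K (Submodule.map f W)
  · -- u(K²) = 0
    have hbot : Submodule.map f W = ⊥ := Submodule.finrank_eq_zero.mp hd
    have hWker : W ≤ LinearMap.ker f := by
      intro x hx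
      have : f x ∈ Submodule.map f W := ⟨x, hx, rfl⟩
      rw [hbot] at this
      simpa using this
    have hWeq : W = LinearMap.ker f :=
      Submodule.eq_of_le_of_finrank_eq hWker (by rw [hW2, hker])
    have hWne : W ≠ ⊤ := by
      intro h
      rw [h, finrank_top, hdim] at hW2
      omega
    have hex : ∃ v, v ∉ W := by
      by_contra h
      push_neg at h
      exact hWne (Submodule.eq_top_iff'.mpr h)
    obtain ⟨v, hv⟩ := hex
    have hfv : f v ≠ 0 := by
      intro h
      exact hv (hWeq ▸ (LinearMap.mem_ker.mpr h))
    have hfvW : f v ∈ W := by rw [hWeq, ← heq]; exact ⟨v, rfl⟩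
    refine ⟨Submodule.span K {f v}, W, W ⊔ Submodule.span K {v}, ?_, hW2, ?_, ?_, le_sup_left,
      ?_, le_sup_left, ?_, ?_, ?_⟩
    · exact finrank_span_singleton hfv
    · have hdisj : Disjoint W (Submodule.span K {v}) :=
        Submodule.disjoint_span_singleton.mpr (fun h => absurd h hv)
      have := Submodule.finrank_sup_add_finrank_inf_eq W (Submodule.span K {v})
      rw [hdisj.eq_bot, finrank_bot, hW2, finrank_span_singleton (by
        intro h; exact hfv (by rw [h]; simp))] at this
      omega
    · exact Submodule.span_le.mpr (by simpa using hfvW)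
    · exact Submodule.span_le.mpr (by simpa using hfvW)
    · exact le_of_eq (heq.trans hWeq.symm)
    · exact hWeq.le
    · rw [Submodule.map_sup, hbot, bot_sup_eq, Submodule.map_span]
      simp
  · -- dim u(K²) = 1
    have hmapW : Submodule.map f W ≤ LinearMap.range f := LinearMap.map_le_range
    have hmapWW : Submodule.map f W ≤ W := hlt.le
    have hinf1 : Module.finrank K (W ⊓ LinearMap.range f : Submodule K (Fin 4 → K)) = 1 := by
      have h1 : Submodule.map f W ≤ W ⊓ LinearMap.range f := le_inf hmapWW hmapW
      have hge : 1 ≤ Module.finrank K (W ⊓ LinearMap.range f : Submodule K (Fin 4 → K)) :=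
        hd ▸ Submodule.finrank_mono h1
      have hle2 : Module.finrank K (W ⊓ LinearMap.range f : Submodule K (Fin 4 → K)) ≤ 2 :=
        hW2 ▸ Submodule.finrank_mono inf_le_left
      have hne2 : Module.finrank K (W ⊓ LinearMap.range f : Submodule K (Fin 4 → K)) ≠ 2 := by
        intro h2
        have : W ⊓ LinearMap.range f = W :=
          Submodule.eq_of_le_of_finrank_eq inf_le_left (by rw [h2, hW2])
        have hWle : W ≤ LinearMap.ker f := by
          rw [← heq, ← this]; exact inf_le_right
        have : Submodule.map f W = ⊥ := by
          rw [Submodule.eq_bot_iff]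
          rintro x ⟨y, hy, rfl⟩
          exact LinearMap.mem_ker.mp (hWle hy)
        rw [this, finrank_bot] at hd
        omega
      omega
    have hsup3 : Module.finrank K (W ⊔ LinearMap.range f : Submodule K (Fin 4 → K)) = 3 := by
      have := Submodule.finrank_sup_add_finrank_inf_eq W (LinearMap.range f)
      rw [hinf1, hW2, hrange] at this
      omega
    refine ⟨Submodule.map f W, LinearMap.range f, W ⊔ LinearMap.range f, hd, hrange, hsup3,
      hmapW, le_sup_right, hmapWW, le_sup_left, le_rfl, heq.le, ?_⟩
    rw [Submodule.map_sup, hmapker, sup_bot_eq]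
end

section
/- For 1 ≤ i < j ≤ n and t ∈ K with t ≠ 0, the lower-triangular unipotent matrix u_{-ε}(t) = id + t·E_{j,i} factors as (r̊_ε + t·E_{j,j} − t⁻¹·E_{i,i} − E_{j,i}) · r̊_ε · (id + t⁻¹·E_{i,j}), where r̊_ε is the permutation matrix of the transposition (i j); in particular id + t·E_{j,i} ∈ B·r̊_ε·B, where B is the group of invertible upper-triangular matrices. -/
open Matrix

def permMat (K : Type*) [Field K] (n : ℕ) (τ : Equiv.Perm (Fin n)) :
    Matrix (Fin n) (Fin n) K :=
  fun r c => if τ c = r then 1 else 0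

lemma mul_permMat (K : Type*) [Field K] (n : ℕ) (τ : Equiv.Perm (Fin n))
    (M : Matrix (Fin n) (Fin n) K) (r c : Fin n) :
    (M * permMat K n τ) r c = M r (τ c) := by
  simp [permMat, mul_apply]

section
variable (K : Type*) [Field K] (n : ℕ) (i j : Fin n)

lemma permMat_sq :
    permMat K n (Equiv.swap i j) * permMat K n (Equiv.swap i j) = 1 := by
  ext r c
  rw [mul_permMat]
  simp [permMat, Matrix.one_apply, eq_comm]

lemma unip_mul (a : K) (hne : i ≠ j) :
    ((1 : Matrix (Fin n) (Fin n) K) + a • single i j (1 : K)) *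
      ((1 : Matrix (Fin n) (Fin n) K) + (-a) • single i j (1 : K)) = 1 := by
  have h0 : single i j (1 : K) * single i j (1 : K) = 0 :=
    single_mul_single_of_ne 1 i j i hne.symm 1
  simp only [add_mul, mul_add, one_mul, mul_one, Matrix.mul_smul, Matrix.smul_mul,
    smul_smul, h0, smul_zero, neg_smul, neg_mul, mul_neg]
  abel

lemma key_identity (hij : i < j) (t : K) (ht : t ≠ 0) :
    ((1 : Matrix (Fin n) (Fin n) K) + t • single j i (1 : K) =
      (permMat K n (Equiv.swap i j) + t • single j j (1 : K)
          - t⁻¹ • single i i (1 : K) - single j i (1 : K))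
        * permMat K n (Equiv.swap i j)
        * ((1 : Matrix (Fin n) (Fin n) K) + t⁻¹ • single i j (1 : K))) := by
  have hne : i ≠ j := ne_of_lt hij
  rw [mul_add, mul_one, Matrix.mul_smul]
  ext r c
  simp only [Matrix.add_apply, Matrix.smul_apply, smul_eq_mul]
  by_cases hc : c = j
  · subst hc
    rw [mul_single_apply_same, mul_permMat, mul_permMat,
      Equiv.swap_apply_left, Equiv.swap_apply_right, mul_one]
    rcases eq_or_ne r i with rfl | hri
    · simp only [Matrix.add_apply, Matrix.sub_apply, Matrix.smul_apply, Matrix.one_apply,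
        single, permMat, smul_eq_mul, of_apply, Equiv.swap_apply_left,
        Equiv.swap_apply_right]
      simp [hne, hne.symm, inv_mul_cancel₀ ht, mul_inv_cancel₀ ht]
    · rcases eq_or_ne r c with rfl | hrc
      · simp only [Matrix.add_apply, Matrix.sub_apply, Matrix.smul_apply, Matrix.one_apply,
          single, permMat, smul_eq_mul, of_apply, Equiv.swap_apply_left,
          Equiv.swap_apply_right]
        simp [hne, hne.symm, Ne.symm hri, inv_mul_cancel₀ ht, mul_inv_cancel₀ ht]
      · simp only [Matrix.add_apply, Matrix.sub_apply, Matrix.smul_apply, Matrix.one_apply,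
          single, permMat, smul_eq_mul, of_apply, Equiv.swap_apply_left,
          Equiv.swap_apply_right]
        simp [hne, hne.symm, hri, hrc, Ne.symm hri, Ne.symm hrc,
          inv_mul_cancel₀ ht, mul_inv_cancel₀ ht]
  · rw [mul_single_apply_of_ne (hbj := hc), mul_zero, add_zero, mul_permMat]
    by_cases hci : c = i
    · subst hci
      rw [Equiv.swap_apply_left]
      simp only [Matrix.add_apply, Matrix.sub_apply, Matrix.smul_apply, Matrix.one_apply,
        single, permMat, smul_eq_mul, of_apply, Equiv.swap_apply_right]
      rcases eq_or_ne r j with rfl | hrj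
      · simp [hne, hne.symm, hc]
      · simp [hne, hne.symm, hrj, Ne.symm hrj, eq_comm (a := r)]
    · rw [Equiv.swap_apply_of_ne_of_ne hci hc]
      simp only [Matrix.add_apply, Matrix.sub_apply, Matrix.smul_apply, Matrix.one_apply,
        single, permMat, smul_eq_mul, of_apply]
      simp [hci, hc, Ne.symm hci, Ne.symm hc, eq_comm (a := r),
        Equiv.swap_apply_of_ne_of_ne hci hc]

lemma A_triangular (hij : i < j) (t : K) :
    ∀ r c : Fin n, c < r →
      (permMat K n (Equiv.swap i j) + t • single j j (1 : K)
          - t⁻¹ • single i i (1 : K) - single j i (1 : K)) r c = 0 := by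
  have hne : i ≠ j := ne_of_lt hij
  intro r c hcr
  have hrc : r ≠ c := ne_of_gt hcr
  simp only [Matrix.add_apply, Matrix.sub_apply, Matrix.smul_apply, single,
    permMat, of_apply, smul_eq_mul]
  rcases eq_or_ne c i with rfl | hci
  · rw [Equiv.swap_apply_left]
    rcases eq_or_ne j r with rfl | hjr
    · simp [hne.symm, hrc, Ne.symm hrc]
    · simp [hjr, hrc, Ne.symm hrc]
  · rcases eq_or_ne c j with rfl | hcj
    · rw [Equiv.swap_apply_right]
      have hir : i ≠ r := fun h => absurd (h ▸ hcr) (not_lt.mpr hij.le)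
      simp [hir, hci, Ne.symm hci, hrc, Ne.symm hrc]
    · rw [Equiv.swap_apply_of_ne_of_ne hci hcj]
      simp [Ne.symm hrc, hci, Ne.symm hci, hcj, Ne.symm hcj]

end

/-- For `i < j` and `t ≠ 0`, `id + t·E_{j,i}` factors as
`(r̊ + t·E_{j,j} − t⁻¹·E_{i,i} − E_{j,i}) · r̊ · (id + t⁻¹·E_{i,j})`, where `r̊` is the
permutation matrix of the transposition `(i j)`; in particular `id + t·E_{j,i} ∈ B·r̊·B`. -/
theorem stmt_15 (K : Type*) [Field K] (n : ℕ) (i j : Fin n) (hij : i < j)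
    (t : K) (ht : t ≠ 0) :
    ((1 : Matrix (Fin n) (Fin n) K) + t • single j i (1 : K) =
      (permMat K n (Equiv.swap i j) + t • single j j (1 : K)
          - t⁻¹ • single i i (1 : K) - single j i (1 : K))
        * permMat K n (Equiv.swap i j)
        * ((1 : Matrix (Fin n) (Fin n) K) + t⁻¹ • single i j (1 : K))) ∧
    ∃ b₁ b₂ : GL (Fin n) K,
      (∀ r c : Fin n, c < r → (b₁ : Matrix (Fin n) (Fin n) K) r c = 0) ∧
      (∀ r c : Fin n, c < r → (b₂ : Matrix (Fin n) (Fin n) K) r c = 0) ∧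
      (1 : Matrix (Fin n) (Fin n) K) + t • single j i (1 : K) =
        (b₁ : Matrix (Fin n) (Fin n) K) * permMat K n (Equiv.swap i j)
          * (b₂ : Matrix (Fin n) (Fin n) K) := by
  have hne : i ≠ j := ne_of_lt hij
  have key := key_identity K n i j hij t ht
  refine ⟨key, ?_⟩
  -- units
  set P : Matrix (Fin n) (Fin n) K := permMat K n (Equiv.swap i j) with hP
  set A : Matrix (Fin n) (Fin n) K :=
    P + t • single j j (1 : K) - t⁻¹ • single i i (1 : K)
      - single j i (1 : K) with hA
  have hPP : P * P = 1 := permMat_sq K n i j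
  have hB₁ : ((1 : Matrix (Fin n) (Fin n) K) + t⁻¹ • single i j (1 : K)) *
      ((1 : Matrix (Fin n) (Fin n) K) + (-t⁻¹) • single i j (1 : K)) = 1 :=
    unip_mul K n i j t⁻¹ hne
  have hB₂ : ((1 : Matrix (Fin n) (Fin n) K) + (-t⁻¹) • single i j (1 : K)) *
      ((1 : Matrix (Fin n) (Fin n) K) + t⁻¹ • single i j (1 : K)) = 1 := by
    have := unip_mul K n i j (-t⁻¹) hne
    rwa [neg_neg] at this
  have hU₁ : ((1 : Matrix (Fin n) (Fin n) K) + t • single j i (1 : K)) *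
      ((1 : Matrix (Fin n) (Fin n) K) + (-t) • single j i (1 : K)) = 1 :=
    unip_mul K n j i t hne.symm
  have hU₂ : ((1 : Matrix (Fin n) (Fin n) K) + (-t) • single j i (1 : K)) *
      ((1 : Matrix (Fin n) (Fin n) K) + t • single j i (1 : K)) = 1 := by
    have := unip_mul K n j i (-t) hne.symm
    rwa [neg_neg] at this
  set B : Matrix (Fin n) (Fin n) K :=
    (1 : Matrix (Fin n) (Fin n) K) + t⁻¹ • single i j (1 : K) with hBdef
  -- A is invertible: A * (P * B) = U with U, P, B invertible
  have hAPB : A * (P * B) = (1 : Matrix (Fin n) (Fin n) K) + t • single j i (1 : K) := by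
    rw [← Matrix.mul_assoc, ← key]
  have hAisU : IsUnit A := by
    refine (Matrix.isUnit_iff_isUnit_det _).mpr (Matrix.isUnit_det_of_right_inverse (B :=
      (P * B) * (1 + (-t) • single j i (1 : K))) ?_)
    rw [← Matrix.mul_assoc, hAPB, hU₁]
  have hBisU : IsUnit B := (Matrix.isUnit_iff_isUnit_det _).mpr (Matrix.isUnit_det_of_right_inverse hB₁)
  refine ⟨hAisU.unit, hBisU.unit, ?_, ?_, ?_⟩
  · intro r c hcr
    rw [IsUnit.unit_spec]
    exact A_triangular K n i j hij t r c hcr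
  · intro r c hcr
    rw [IsUnit.unit_spec]
    have hrc : r ≠ c := ne_of_gt hcr
    have hir : ¬(i = r ∧ j = c) := by
      rintro ⟨rfl, rfl⟩
      exact absurd hcr (not_lt.mpr hij.le)
    simp only [hBdef, Matrix.add_apply, Matrix.smul_apply, Matrix.one_apply,
      single, of_apply, smul_eq_mul]
    rw [if_neg hrc, if_neg hir]
    ring
  · rw [IsUnit.unit_spec, IsUnit.unit_spec]
    exact key
end
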